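/- Let H and Ĥ be n×n symmetric positive semidefinite matrices and λ > 0. Then ‖(I + λ⁻² H)⁻¹ − (I + λ⁻² Ĥ)⁻¹‖₂ ≤ ω/(λ² + ω), where ω = ‖H − Ĥ‖_F and ‖·‖₂ is the spectral (operator 2-) norm. -/

import Mathlib

noncomputable def frobNorm {n : ℕ} (M : Matrix (Fin n) (Fin n) ℝ) : ℝ :=
  Real.sqrt (∑ i, ∑ j, (M i j) ^ 2)

noncomputable def specNorm {n : ℕ} (M : Matrix (Fin n) (Fin n) ℝ) : ℝ :=
  ‖Matrix.toEuclideanCLM (𝕜 := ℝ) M‖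

section Aux

open Matrix

variable {n : ℕ}

-- functional calculus helper
noncomputable def Phi {A : Matrix (Fin n) (Fin n) ℝ} (hA : A.IsHermitian)
    (v : Fin n → ℝ) : Matrix (Fin n) (Fin n) ℝ :=
  (hA.eigenvectorUnitary : Matrix (Fin n) (Fin n) ℝ) * diagonal v *
    star (hA.eigenvectorUnitary : Matrix (Fin n) (Fin n) ℝ)

variable {A : Matrix (Fin n) (Fin n) ℝ} (hA : A.IsHermitian)

lemma Phi.mul (v w : Fin n → ℝ) : Phi hA v * Phi hA w = Phi hA (v * w) := by
  have h1 : star (hA.eigenvectorUnitary : Matrix (Fin n) (Fin n) ℝ) *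
      (hA.eigenvectorUnitary : Matrix (Fin n) (Fin n) ℝ) = 1 :=
    Matrix.UnitaryGroup.star_mul_self _
  simp only [Phi, Matrix.mul_assoc]
  rw [← Matrix.mul_assoc (star _) _, h1, Matrix.one_mul,
    ← Matrix.mul_assoc (diagonal v), diagonal_mul_diagonal]
  rfl

lemma Phi.add (v w : Fin n → ℝ) : Phi hA v + Phi hA w = Phi hA (v + w) := by
  simp only [Phi, ← Matrix.add_mul, ← Matrix.mul_add, diagonal_add]
  rfl

lemma Phi.smul (r : ℝ) (v : Fin n → ℝ) : r • Phi hA v = Phi hA (r • v) := by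
  simp only [Phi, Matrix.smul_mul, Matrix.mul_smul, diagonal_smul]

lemma Phi.one : Phi hA 1 = 1 := by
  have h1 : (hA.eigenvectorUnitary : Matrix (Fin n) (Fin n) ℝ) *
      star (hA.eigenvectorUnitary : Matrix (Fin n) (Fin n) ℝ) = 1 :=
    (Matrix.mem_unitaryGroup_iff).mp hA.eigenvectorUnitary.2
  have h2 : diagonal (1 : Fin n → ℝ) = 1 := by
    ext i j; by_cases h : i = j <;> simp [diagonal, h, Matrix.one_apply]
  simp only [Phi, h2, Matrix.mul_one, h1]

lemma Phi.self : Phi hA hA.eigenvalues = A := by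
  have h := hA.spectral_theorem
  rw [Unitary.conjStarAlgAut_apply] at h
  rw [Phi, show diagonal hA.eigenvalues
      = diagonal ((RCLike.ofReal : ℝ → ℝ) ∘ hA.eigenvalues) by
    ext i j; by_cases hij : i = j <;> simp [diagonal, hij], ← h]

lemma Phi.posSemidef {v : Fin n → ℝ} (hv : ∀ i, 0 ≤ v i) : (Phi hA v).PosSemidef := by
  have : (diagonal v).PosSemidef := Matrix.PosSemidef.diagonal hv
  simpa [Phi, Matrix.star_eq_conjTranspose] using
    this.mul_mul_conjTranspose_same (hA.eigenvectorUnitary : Matrix (Fin n) (Fin n) ℝ)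

lemma Phi.inv {v : Fin n → ℝ} (hv : ∀ i, v i ≠ 0) : (Phi hA v)⁻¹ = Phi hA v⁻¹ := by
  apply Matrix.inv_eq_right_inv
  rw [Phi.mul]
  have hvv : v * v⁻¹ = 1 := funext fun i => by
    simp [Pi.mul_apply, mul_inv_cancel₀ (hv i)]
  rw [hvv, Phi.one]

lemma Phi.sub {A : Matrix (Fin n) (Fin n) ℝ} (hA : A.IsHermitian) (v w : Fin n → ℝ) :
    Phi hA v - Phi hA w = Phi hA (v - w) := by
  simp only [Phi, ← Matrix.sub_mul, ← Matrix.mul_sub, diagonal_sub]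
  rfl

lemma key1 {H : Matrix (Fin n) (Fin n) ℝ} (hH : H.PosSemidef) {c d : ℝ}
    (hc : 0 < c) (hd : 0 ≤ d) :
    ((d / (1 + d)) • (1 : Matrix (Fin n) (Fin n) ℝ) -
      ((1 + c • H)⁻¹ - (1 + c • H + d • (1 : Matrix (Fin n) (Fin n) ℝ))⁻¹)).PosSemidef := by
  classical
  have hHer := hH.isHermitian
  set μ := hHer.eigenvalues with hμdef
  have hμ : ∀ i, 0 ≤ μ i := hH.eigenvalues_nonneg
  set α : Fin n → ℝ := fun i => 1 + c * μ i with hαdef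
  set β : Fin n → ℝ := fun i => 1 + c * μ i + d with hβdef
  have hα1 : ∀ i, 1 ≤ α i := fun i => by
    have := mul_nonneg hc.le (hμ i); simp [hαdef]; linarith
  have hαpos : ∀ i, 0 < α i := fun i => lt_of_lt_of_le one_pos (hα1 i)
  have hβpos : ∀ i, 0 < β i := fun i => by have := hαpos i; simp [hβdef, hαdef] at *; linarith
  have eA : (1 : Matrix (Fin n) (Fin n) ℝ) + c • H = Phi hHer α := by
    have hfun : α = 1 + c • μ := by funext i; simp [hαdef]
    rw [hfun, ← Phi.add, Phi.one, ← Phi.smul, Phi.self]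
  have eB : (1 : Matrix (Fin n) (Fin n) ℝ) + c • H + d • (1 : Matrix (Fin n) (Fin n) ℝ)
      = Phi hHer β := by
    have hfun : β = α + d • (1 : Fin n → ℝ) := by funext i; simp [hαdef, hβdef]
    rw [hfun, ← Phi.add, ← Phi.smul, Phi.one, ← eA]
  have eAinv : ((1 : Matrix (Fin n) (Fin n) ℝ) + c • H)⁻¹ = Phi hHer α⁻¹ := by
    rw [eA, Phi.inv hHer (fun i => (hαpos i).ne')]
  have eBinv : ((1 : Matrix (Fin n) (Fin n) ℝ) + c • H + d • 1)⁻¹ = Phi hHer β⁻¹ := by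
    rw [eB, Phi.inv hHer (fun i => (hβpos i).ne')]
  have eK : (d / (1 + d)) • (1 : Matrix (Fin n) (Fin n) ℝ)
      = Phi hHer (fun _ => d / (1 + d)) := by
    rw [show (fun _ => d / (1+d) : Fin n → ℝ) = (d/(1+d)) • (1 : Fin n → ℝ) from by
      funext i; simp, ← Phi.smul, Phi.one]
  have etotal : (d / (1 + d)) • (1 : Matrix (Fin n) (Fin n) ℝ) -
      (((1 : Matrix (Fin n) (Fin n) ℝ) + c • H)⁻¹ - (1 + c • H + d • 1)⁻¹)
      = Phi hHer (fun i => d / (1 + d) - ((α i)⁻¹ - (β i)⁻¹)) := by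
    rw [eK, eAinv, eBinv, Phi.sub, Phi.sub]
    rfl
  rw [etotal]
  apply Phi.posSemidef
  intro i
  have ha := hα1 i
  have hb : β i = α i + d := by simp [hαdef, hβdef]
  have hapos := hαpos i
  have hbpos := hβpos i
  have key : (α i)⁻¹ - (β i)⁻¹ = d / (α i * β i) := by
    field_simp
    rw [hb]; ring
  rw [key]
  have h1d : (0:ℝ) < 1 + d := by linarith
  have hprod : 1 + d ≤ α i * β i := by nlinarith [ha, hb, hd]
  have hub : d / (α i * β i) ≤ d / (1 + d) := by
    rw [div_le_div_iff₀ (mul_pos hapos hbpos) h1d]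
    exact mul_le_mul_of_nonneg_left hprod hd
  linarith
lemma inv_sub_inv_psd {A B : Matrix (Fin n) (Fin n) ℝ} (hA : A.PosDef) (hB : B.PosDef)
    (h : (B - A).PosSemidef) : (A⁻¹ - B⁻¹).PosSemidef := by
  classical
  have hBinv : (B⁻¹).PosDef := hB.inv
  set S := Phi hBinv.isHermitian (fun i => Real.sqrt (hBinv.isHermitian.eigenvalues i)) with hSdef
  have hSherm : S.IsHermitian := (Phi.posSemidef hBinv.isHermitian (fun i => Real.sqrt_nonneg _)).1
  have hSS : S * S = B⁻¹ := by
    rw [hSdef, Phi.mul]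
    convert Phi.self hBinv.isHermitian using 2
    funext i
    simp only [Pi.mul_apply]
    exact Real.mul_self_sqrt (hBinv.posSemidef.eigenvalues_nonneg i)
  have hdetB : IsUnit B.det := hB.det_pos.ne'.isUnit
  have hdetS : IsUnit S.det := by
    have h1 : S.det * S.det = (B⁻¹).det := by rw [← det_mul, hSS]
    have h2 : (B⁻¹).det ≠ 0 := hBinv.det_pos.ne'
    exact isUnit_iff_ne_zero.mpr (fun h0 => h2 (by rw [← h1, h0, zero_mul]))
  have hSinv : S * S⁻¹ = 1 := mul_nonsing_inv _ hdetS
  have hSinv' : S⁻¹ * S = 1 := nonsing_inv_mul _ hdetS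
  have hBmat : B = S⁻¹ * S⁻¹ := by
    have h1 : (S * S)⁻¹ = (B⁻¹)⁻¹ := by rw [hSS]
    rwa [Matrix.mul_inv_rev, Matrix.nonsing_inv_nonsing_inv B hdetB, eq_comm] at h1
  have hSBS : S * B * S = 1 := by
    have e : S * (S⁻¹ * S⁻¹) * S = (S * S⁻¹) * (S⁻¹ * S) := by
      simp only [Matrix.mul_assoc]
    rw [hBmat, e, hSinv, hSinv', Matrix.one_mul]
  set X := S * A * S with hXdef
  have hXpsd : X.PosSemidef := by
    have := hA.posSemidef.mul_mul_conjTranspose_same S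
    rwa [hSherm.eq] at this
  have hdetA : IsUnit A.det := hA.det_pos.ne'.isUnit
  have hdetX : IsUnit X.det := by
    rw [hXdef, det_mul, det_mul]
    exact (hdetS.mul hdetA).mul hdetS
  have hXinv : X * X⁻¹ = 1 := mul_nonsing_inv _ hdetX
  have h1X : (1 - X).PosSemidef := by
    have hc := h.mul_mul_conjTranspose_same S
    have e : S * (B - A) * S = 1 - X := by
      rw [Matrix.mul_sub, Matrix.sub_mul, hSBS]
    rwa [hSherm.eq, e] at hc
  have hXinvpsd : (X⁻¹).PosSemidef := hXpsd.inv
  set T := Phi hXinvpsd.isHermitian (fun i => Real.sqrt (hXinvpsd.isHermitian.eigenvalues i)) with hTdef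
  have hTherm : T.IsHermitian := (Phi.posSemidef hXinvpsd.isHermitian (fun i => Real.sqrt_nonneg _)).1
  have hTT : T * T = X⁻¹ := by
    rw [hTdef, Phi.mul]
    convert Phi.self hXinvpsd.isHermitian using 2
    funext i
    simp only [Pi.mul_apply]
    exact Real.mul_self_sqrt (hXinvpsd.eigenvalues_nonneg i)
  have hdetT : IsUnit T.det := by
    have h1 : T.det * T.det = (X⁻¹).det := by rw [← det_mul, hTT]
    have h2 : (X⁻¹).det ≠ 0 := by
      rw [det_nonsing_inv, Ring.inverse_eq_inv']
      exact inv_ne_zero hdetX.ne_zero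
    exact isUnit_iff_ne_zero.mpr (fun h0 => h2 (by rw [← h1, h0, zero_mul]))
  have hTXT : T * X * T = 1 := by
    have h4 : T * X * (T * T) = T := by
      rw [hTT, Matrix.mul_assoc, hXinv, Matrix.mul_one]
    calc T * X * T = T * X * T * (T * T⁻¹) := by rw [mul_nonsing_inv _ hdetT, Matrix.mul_one]
      _ = (T * X * (T * T)) * T⁻¹ := by simp only [Matrix.mul_assoc]
      _ = T * T⁻¹ := by rw [h4]
      _ = 1 := mul_nonsing_inv _ hdetT
  have h5 : (X⁻¹ - 1).PosSemidef := by
    have hc := h1X.mul_mul_conjTranspose_same T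
    have e : T * (1 - X) * T = X⁻¹ - 1 := by
      rw [Matrix.mul_sub, Matrix.sub_mul, Matrix.mul_one, hTT, hTXT]
    rwa [hTherm.eq, e] at hc
  have hXinveq : X⁻¹ = S⁻¹ * (A⁻¹ * S⁻¹) := by
    rw [hXdef, Matrix.mul_inv_rev, Matrix.mul_inv_rev]
  have e2 : S * (X⁻¹ - 1) * S = A⁻¹ - B⁻¹ := by
    rw [Matrix.mul_sub, Matrix.sub_mul, Matrix.mul_one, hSS, hXinveq,
      ← Matrix.mul_assoc S S⁻¹, hSinv, Matrix.one_mul, Matrix.mul_assoc, hSinv',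
      Matrix.mul_one]
  have hc := h5.mul_mul_conjTranspose_same S
  rwa [hSherm.eq, e2] at hc
lemma dot_le_frob {E : Matrix (Fin n) (Fin n) ℝ} (x : Fin n → ℝ) :
    x ⬝ᵥ (E *ᵥ x) ≤ frobNorm E * (x ⬝ᵥ x) := by
  have h1 : x ⬝ᵥ (E *ᵥ x) = ∑ p : Fin n × Fin n, E p.1 p.2 * (x p.1 * x p.2) := by
    rw [Fintype.sum_prod_type]
    simp only [dotProduct, mulVec, dotProduct, Finset.mul_sum]
    congr 1; funext i; congr 1; funext j; ring
  have h2 := Real.sum_mul_le_sqrt_mul_sqrt Finset.univ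
    (fun p : Fin n × Fin n => E p.1 p.2) (fun p : Fin n × Fin n => x p.1 * x p.2)
  have h3 : Real.sqrt (∑ p : Fin n × Fin n, (E p.1 p.2) ^ 2) = frobNorm E := by
    rw [frobNorm, Fintype.sum_prod_type]
  have h4 : Real.sqrt (∑ p : Fin n × Fin n, (x p.1 * x p.2) ^ 2) = x ⬝ᵥ x := by
    have e : ∑ p : Fin n × Fin n, (x p.1 * x p.2) ^ 2 = (∑ i, x i ^ 2) ^ 2 := by
      rw [Fintype.sum_prod_type, sq (∑ i, x i ^ 2), Finset.sum_mul]
      congr 1; funext i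
      rw [Finset.mul_sum]
      congr 1; funext j; ring
    rw [e, Real.sqrt_sq (by positivity)]
    simp [dotProduct, sq]
  rw [h1]
  calc ∑ p : Fin n × Fin n, E p.1 p.2 * (x p.1 * x p.2) ≤ _ := h2
  _ = frobNorm E * (x ⬝ᵥ x) := by rw [h3, h4]

lemma frob_smul_one_sub_psd {E : Matrix (Fin n) (Fin n) ℝ} (hE : E.IsHermitian) :
    (frobNorm E • (1 : Matrix (Fin n) (Fin n) ℝ) - E).PosSemidef := by
  refine Matrix.PosSemidef.of_dotProduct_mulVec_nonneg ?_ ?_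
  · refine (Matrix.IsHermitian.sub ?_ hE)
    simp [Matrix.IsHermitian, Matrix.conjTranspose_smul]
  · intro x
    have h1 : star x ⬝ᵥ ((frobNorm E • (1 : Matrix (Fin n) (Fin n) ℝ) - E) *ᵥ x)
        = frobNorm E * (x ⬝ᵥ x) - x ⬝ᵥ (E *ᵥ x) := by
      rw [star_trivial, Matrix.sub_mulVec, Matrix.smul_mulVec, Matrix.one_mulVec,
        dotProduct_sub, dotProduct_smul]
      rfl
    rw [h1, sub_nonneg]
    exact dot_le_frob x
lemma smul_one_herm (k : ℝ) : (k • (1 : Matrix (Fin n) (Fin n) ℝ)).IsHermitian := by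
  simp [Matrix.IsHermitian, Matrix.conjTranspose_smul]

lemma specNorm_le_of_psd_sandwich {D : Matrix (Fin n) (Fin n) ℝ} {k : ℝ} (hk : 0 ≤ k)
    (h1 : (k • 1 - D).PosSemidef) (h2 : (k • 1 + D).PosSemidef) : specNorm D ≤ k := by
  classical
  have hD : D.IsHermitian := by
    have h3 := (smul_one_herm (n := n) k).sub h1.1
    simpa using h3
  set ν := hD.eigenvalues with hν
  have hbound : ∀ i, |ν i| ≤ k := by
    intro i
    set v : Fin n → ℝ := ⇑(hD.eigenvectorBasis i) with hv
    have hvv : v ⬝ᵥ v = 1 := by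
      have hn : ‖hD.eigenvectorBasis i‖ = 1 := hD.eigenvectorBasis.orthonormal.1 i
      have hinner : (inner ℝ (hD.eigenvectorBasis i) (hD.eigenvectorBasis i) : ℝ) = 1 := by
        rw [real_inner_self_eq_norm_mul_norm, hn, mul_one]
      rw [PiLp.inner_apply] at hinner
      rw [hv]
      simpa [dotProduct, sq] using hinner
    have hmul : D *ᵥ v = ν i • v := hD.mulVec_eigenvectorBasis i
    have hq1 := h1.dotProduct_mulVec_nonneg v
    have hq2 := h2.dotProduct_mulVec_nonneg v
    rw [star_trivial, Matrix.sub_mulVec, Matrix.smul_mulVec, Matrix.one_mulVec, hmul,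
      dotProduct_sub, dotProduct_smul, dotProduct_smul, hvv] at hq1
    rw [star_trivial, Matrix.add_mulVec, Matrix.smul_mulVec, Matrix.one_mulVec, hmul,
      dotProduct_add, dotProduct_smul, dotProduct_smul, hvv] at hq2
    rw [abs_le]
    constructor
    · simp at hq2; linarith
    · simp at hq1; linarith
  have hDD : D * D = Phi hD (ν * ν) := by rw [← Phi.mul, Phi.self]
  have hpsd : ((k ^ 2) • (1 : Matrix (Fin n) (Fin n) ℝ) - D * D).PosSemidef := by
    have ek : (k ^ 2) • (1 : Matrix (Fin n) (Fin n) ℝ) = Phi hD (fun _ => k ^ 2) := by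
      rw [show (fun _ => k ^ 2 : Fin n → ℝ) = (k ^ 2) • (1 : Fin n → ℝ) from by
        funext i; simp, ← Phi.smul, Phi.one]
    rw [ek, hDD, Phi.sub]
    apply Phi.posSemidef
    intro i
    have hbi := abs_le.mp (hbound i)
    simp only [Pi.sub_apply, Pi.mul_apply]
    nlinarith [hbi.1, hbi.2]
  have hDT : Dᵀ = D := by
    rw [← Matrix.conjTranspose_eq_transpose_of_trivial, hD.eq]
  have hquad : ∀ y : Fin n → ℝ, (D *ᵥ y) ⬝ᵥ (D *ᵥ y) ≤ k ^ 2 * (y ⬝ᵥ y) := by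
    intro y
    have hq := hpsd.dotProduct_mulVec_nonneg y
    rw [star_trivial, Matrix.sub_mulVec, Matrix.smul_mulVec, Matrix.one_mulVec,
      dotProduct_sub, dotProduct_smul] at hq
    have e : (D *ᵥ y) ⬝ᵥ (D *ᵥ y) = y ⬝ᵥ ((D * D) *ᵥ y) := by
      rw [← Matrix.mulVec_mulVec, Matrix.dotProduct_mulVec y D (D *ᵥ y),
        ← Matrix.mulVec_transpose, hDT]
    rw [e]
    simp only [smul_eq_mul] at hq
    linarith
  rw [specNorm]
  apply ContinuousLinearMap.opNorm_le_bound _ hk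
  intro x
  have hx : (WithLp.equiv 2 (Fin n → ℝ)).symm ((WithLp.equiv 2 (Fin n → ℝ)) x) = x :=
    (WithLp.equiv 2 (Fin n → ℝ)).symm_apply_apply x
  set y : Fin n → ℝ := (WithLp.equiv 2 (Fin n → ℝ)) x with hy
  rw [← hx, show Matrix.toEuclideanCLM (𝕜 := ℝ) D ((WithLp.equiv 2 (Fin n → ℝ)).symm y)
    = (WithLp.equiv 2 (Fin n → ℝ)).symm (D *ᵥ y) from rfl]
  have hnorm1 : ‖(WithLp.equiv 2 (Fin n → ℝ)).symm (D *ᵥ y)‖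
      = Real.sqrt (∑ j, (D *ᵥ y) j ^ 2) := by
    rw [EuclideanSpace.norm_eq]
    congr 1
    refine Finset.sum_congr rfl fun j _ => ?_
    simp [Real.norm_eq_abs, sq_abs]
  have hnorm2 : ‖(WithLp.equiv 2 (Fin n → ℝ)).symm y‖ = Real.sqrt (∑ j, y j ^ 2) := by
    rw [EuclideanSpace.norm_eq]
    congr 1
    refine Finset.sum_congr rfl fun j _ => ?_
    simp [Real.norm_eq_abs, sq_abs]
  rw [hnorm1, hx, show ‖x‖ = Real.sqrt (∑ j, y j ^ 2) from by rw [← hx, hnorm2]]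
  have hsum : ∑ j, (D *ᵥ y) j ^ 2 ≤ k ^ 2 * ∑ j, y j ^ 2 := by
    have := hquad y
    simpa [dotProduct, sq] using this
  calc Real.sqrt (∑ j, (D *ᵥ y) j ^ 2) ≤ Real.sqrt (k ^ 2 * ∑ j, y j ^ 2) :=
        Real.sqrt_le_sqrt hsum
    _ = k * Real.sqrt (∑ j, y j ^ 2) := by
        rw [Real.sqrt_mul (by positivity), Real.sqrt_sq hk]

lemma psd_smul_nonneg {M : Matrix (Fin n) (Fin n) ℝ} (hM : M.PosSemidef) {r : ℝ}
    (hr : 0 ≤ r) : (r • M).PosSemidef := by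
  refine Matrix.PosSemidef.of_dotProduct_mulVec_nonneg ?_ ?_
  · simpa [Matrix.IsHermitian, Matrix.conjTranspose_smul] using congrArg (r • ·) hM.1
  · intro x
    rw [Matrix.smul_mulVec, dotProduct_smul, smul_eq_mul]
    exact mul_nonneg hr (hM.dotProduct_mulVec_nonneg x)

end Aux

theorem stmt_12 {n : ℕ} (H Hhat : Matrix (Fin n) (Fin n) ℝ)
    (hH : H.PosSemidef) (hHhat : Hhat.PosSemidef) (l : ℝ) (hl : 0 < l) :
    specNorm ((1 + (l ^ 2)⁻¹ • H)⁻¹ - (1 + (l ^ 2)⁻¹ • Hhat)⁻¹) ≤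
      frobNorm (H - Hhat) / (l ^ 2 + frobNorm (H - Hhat)) := by
  classical
  open Matrix in
  set c : ℝ := (l ^ 2)⁻¹ with hcdef
  have hc : 0 < c := by positivity
  set ω : ℝ := frobNorm (H - Hhat) with hωdef
  have hω0 : 0 ≤ ω := Real.sqrt_nonneg _
  set d : ℝ := c * ω with hddef
  have hd : 0 ≤ d := mul_nonneg hc.le hω0
  set k : ℝ := d / (1 + d) with hkdef
  have h1d : (0:ℝ) < 1 + d := by linarith
  have hk : 0 ≤ k := div_nonneg hd h1d.le
  -- positivity of the shifted matrices
  have hcH : (c • H).PosSemidef := psd_smul_nonneg hH hc.le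
  have hcHhat : (c • Hhat).PosSemidef := psd_smul_nonneg hHhat hc.le
  have hone : (1 : Matrix (Fin n) (Fin n) ℝ).PosDef := Matrix.PosDef.one
  have hd1 : (d • (1 : Matrix (Fin n) (Fin n) ℝ)).PosSemidef :=
    psd_smul_nonneg Matrix.PosSemidef.one hd
  have hA : (1 + c • H).PosDef := hone.add_posSemidef hcH
  have hB : (1 + c • Hhat).PosDef := hone.add_posSemidef hcHhat
  have hA' : (1 + c • H + d • (1 : Matrix (Fin n) (Fin n) ℝ)).PosDef :=
    hA.add_posSemidef hd1
  have hB' : (1 + c • Hhat + d • (1 : Matrix (Fin n) (Fin n) ℝ)).PosDef :=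
    hB.add_posSemidef hd1
  -- Frobenius symmetry
  have hfs : frobNorm (Hhat - H) = ω := by
    rw [hωdef, frobNorm, frobNorm]
    congr 1
    refine Finset.sum_congr rfl fun i _ => Finset.sum_congr rfl fun j _ => ?_
    simp only [Matrix.sub_apply]
    ring
  -- frobNorm bounds
  have hpsd1 : (ω • (1 : Matrix (Fin n) (Fin n) ℝ) - (Hhat - H)).PosSemidef := by
    have := frob_smul_one_sub_psd (hHhat.1.sub hH.1)
    rwa [hfs] at this
  have hpsd2 : (ω • (1 : Matrix (Fin n) (Fin n) ℝ) - (H - Hhat)).PosSemidef := by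
    have := frob_smul_one_sub_psd (hH.1.sub hHhat.1)
    rwa [← hωdef] at this
  -- order relations and inverse antitonicity
  have key2a : ((1 + c • H + d • (1 : Matrix (Fin n) (Fin n) ℝ)) - (1 + c • Hhat)).PosSemidef := by
    have e : (1 + c • H + d • (1 : Matrix (Fin n) (Fin n) ℝ)) - (1 + c • Hhat)
        = c • (ω • (1 : Matrix (Fin n) (Fin n) ℝ) - (Hhat - H)) := by
      rw [hddef, smul_sub, smul_sub, mul_smul]
      abel
    rw [e]
    exact psd_smul_nonneg hpsd1 hc.le
  have key2b : ((1 + c • Hhat + d • (1 : Matrix (Fin n) (Fin n) ℝ)) - (1 + c • H)).PosSemidef := by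
    have e : (1 + c • Hhat + d • (1 : Matrix (Fin n) (Fin n) ℝ)) - (1 + c • H)
        = c • (ω • (1 : Matrix (Fin n) (Fin n) ℝ) - (H - Hhat)) := by
      rw [hddef, smul_sub, smul_sub, mul_smul]
      abel
    rw [e]
    exact psd_smul_nonneg hpsd2 hc.le
  have inv1 : ((1 + c • Hhat)⁻¹ -
      (1 + c • H + d • (1 : Matrix (Fin n) (Fin n) ℝ))⁻¹).PosSemidef :=
    inv_sub_inv_psd hB hA' key2a
  have inv2 : ((1 + c • H)⁻¹ -
      (1 + c • Hhat + d • (1 : Matrix (Fin n) (Fin n) ℝ))⁻¹).PosSemidef :=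
    inv_sub_inv_psd hA hB' key2b
  have k1a := key1 hH hc hd
  have k1b := key1 hHhat hc hd
  have sandwich1 : (k • (1 : Matrix (Fin n) (Fin n) ℝ) -
      ((1 + c • H)⁻¹ - (1 + c • Hhat)⁻¹)).PosSemidef := by
    have e : k • (1 : Matrix (Fin n) (Fin n) ℝ) - ((1 + c • H)⁻¹ - (1 + c • Hhat)⁻¹)
        = (k • (1 : Matrix (Fin n) (Fin n) ℝ) -
            ((1 + c • H)⁻¹ - (1 + c • H + d • (1 : Matrix (Fin n) (Fin n) ℝ))⁻¹))
          + ((1 + c • Hhat)⁻¹ - (1 + c • H + d • (1 : Matrix (Fin n) (Fin n) ℝ))⁻¹) := by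
      abel
    rw [e]
    exact k1a.add inv1
  have sandwich2 : (k • (1 : Matrix (Fin n) (Fin n) ℝ) +
      ((1 + c • H)⁻¹ - (1 + c • Hhat)⁻¹)).PosSemidef := by
    have e : k • (1 : Matrix (Fin n) (Fin n) ℝ) + ((1 + c • H)⁻¹ - (1 + c • Hhat)⁻¹)
        = (k • (1 : Matrix (Fin n) (Fin n) ℝ) -
            ((1 + c • Hhat)⁻¹ - (1 + c • Hhat + d • (1 : Matrix (Fin n) (Fin n) ℝ))⁻¹))
          + ((1 + c • H)⁻¹ - (1 + c • Hhat + d • (1 : Matrix (Fin n) (Fin n) ℝ))⁻¹) := by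
      abel
    rw [e]
    exact k1b.add inv2
  have hmain := specNorm_le_of_psd_sandwich hk sandwich1 sandwich2
  have hkval : k = ω / (l ^ 2 + ω) := by
    have hl2 : (l:ℝ) ^ 2 ≠ 0 := by positivity
    have hden : (0:ℝ) < l ^ 2 + ω := by positivity
    rw [hkdef, hddef, hcdef, div_eq_div_iff h1d.ne' hden.ne']
    have hgen : ∀ L : ℝ, L ≠ 0 → L⁻¹ * ω * (L + ω) = ω * (1 + L⁻¹ * ω) := by
      intro L hL
      field_simp
    exact hgen (l ^ 2) hl2
  rw [hkval] at hmain
  exact hmain
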